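/- Let G be a finite connected simple graph with vertex set V and edge set E, where each edge e ∈ E is given an orientation with tail t(e) and head h(e). Let d : ℝ^V → ℝ^E be the discrete gradient map defined by (dφ)_e = φ(h(e)) − φ(t(e)). Let K be a real symmetric positive semidefinite matrix indexed by E × E whose kernel (as a linear map x ↦ Kx) equals the range of d. If E_e ⊆ E is a set of edges such that the spanning subgraph (V, E_e) is connected, then the principal submatrix of K obtained by keeping only the rows and columns indexed by E \ E_e is positive definite; in particular it is invertible. -/

import Mathlib

open Matrix

lemma walk_const {V : Type*} {G : SimpleGraph V} (φ : V → ℝ)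
    (hadj : ∀ u v, G.Adj u v → φ u = φ v) {u v : V} (w : G.Walk u v) : φ u = φ v := by
  induction w with
  | nil => rfl
  | cons hx _ ih => exact (hadj _ _ hx).trans ih

lemma sum_extend_subtype {E : Type*} [Fintype E] [DecidableEq E] (Ee : Finset E)
    (g : E → ℝ) (hg : ∀ e ∈ Ee, g e = 0) :
    ∑ e : E, g e = ∑ e : {e : E // e ∉ Ee}, g e.1 := by
  rw [← Finset.sum_subtype Eeᶜ (by simp) g]
  exact (Finset.sum_subset (Finset.subset_univ _)
    (fun e _ he => hg e (by simpa using he))).symm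

/-- **Lemma 1 (locInv), linear-algebraic form.** Let `G` be a finite connected simple
graph with vertex set `V` and oriented edge set `E` (tails `t`, heads `h`, no loops).
Let `d` be the discrete gradient map `(d φ) e = φ (h e) - φ (t e)`, and let `K` be a real
symmetric positive semidefinite matrix indexed by `E × E` whose kernel (as the linear map
`x ↦ K.mulVec x`) equals the range of `d`. If `Ee ⊆ E` is a set of edges whose spanning
subgraph `(V, Ee)` is connected, then the principal submatrix of `K` on the rows and
columns indexed by `E \ Ee` is positive definite; in particular it is invertible. -/
theorem submatrix_posDef_of_connected_eliminated
    {V E : Type*} [Fintype V] [DecidableEq V] [Fintype E] [DecidableEq E]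
    (t h : E → V) (hloop : ∀ e, t e ≠ h e)
    (hconn : (SimpleGraph.fromEdgeSet {s : Sym2 V | ∃ e : E, s = s(t e, h e)}).Connected)
    (d : (V → ℝ) → (E → ℝ))
    (hd : ∀ (φ : V → ℝ) (e : E), d φ e = φ (h e) - φ (t e))
    (K : Matrix E E ℝ) (hK : K.PosSemidef)
    (hker : ∀ x : E → ℝ, K.mulVec x = 0 ↔ ∃ φ : V → ℝ, x = d φ)
    (Ee : Finset E)
    (hEe : (SimpleGraph.fromEdgeSet {s : Sym2 V | ∃ e ∈ Ee, s = s(t e, h e)}).Connected) :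
    (K.submatrix (Subtype.val : {e : E // e ∉ Ee} → E)
        (Subtype.val : {e : E // e ∉ Ee} → E)).PosDef ∧
      IsUnit (K.submatrix (Subtype.val : {e : E // e ∉ Ee} → E)
        (Subtype.val : {e : E // e ∉ Ee} → E)) := by
  have hsub : (K.submatrix (Subtype.val : {e : E // e ∉ Ee} → E)
      (Subtype.val : {e : E // e ∉ Ee} → E)).PosSemidef := hK.submatrix _
  have key : ∀ x : {e : E // e ∉ Ee} → ℝ,
      x ⬝ᵥ (K.submatrix Subtype.val Subtype.val).mulVec x = 0 → x = 0 := by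
    intro x hx0
    set y : E → ℝ := fun e => if he : e ∈ Ee then 0 else x ⟨e, he⟩ with hy
    have hyval : ∀ e : {e : E // e ∉ Ee}, y e.1 = x e := by
      intro e; simp [hy, e.2]
    have hy0 : ∀ e ∈ Ee, y e = 0 := by intro e he; simp [hy, he]
    have hinner : ∀ e : E, K.mulVec y e
        = ∑ f : {e : E // e ∉ Ee}, K e f.1 * x f := by
      intro e
      rw [Matrix.mulVec, dotProduct,
        sum_extend_subtype Ee (fun f => K e f * y f)
          (fun f hf => by show K e f * y f = 0; rw [hy0 f hf, mul_zero])]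
      exact Finset.sum_congr rfl fun f _ => by rw [hyval f]
    have hq : y ⬝ᵥ K.mulVec y
        = x ⬝ᵥ (K.submatrix Subtype.val Subtype.val).mulVec x := by
      rw [dotProduct,
        sum_extend_subtype Ee (fun e => y e * K.mulVec y e)
          (fun e he => by show y e * _ = 0; rw [hy0 e he, zero_mul])]
      refine Finset.sum_congr rfl fun e _ => ?_
      rw [hyval e, hinner e.1]
      rfl
    have hKy : K.mulVec y = 0 := by
      have := hK.dotProduct_mulVec_zero_iff y
      simp only [star_trivial] at this
      exact this.mp (by rw [hq, hx0])
    obtain ⟨φ, hφ⟩ := (hker y).mp hKy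
    -- φ is constant on the connected subgraph, hence constant
    have hadj : ∀ u v, (SimpleGraph.fromEdgeSet
        {s : Sym2 V | ∃ e ∈ Ee, s = s(t e, h e)}).Adj u v → φ u = φ v := by
      intro u v huv
      rw [SimpleGraph.fromEdgeSet_adj] at huv
      obtain ⟨⟨e, he, hs⟩, -⟩ := huv
      have h0 : φ (h e) - φ (t e) = 0 := by
        rw [← hd φ e, ← hφ]; exact hy0 e he
      have h0' : φ (h e) = φ (t e) := by linarith
      rcases Sym2.eq_iff.mp hs with ⟨h1, h2⟩ | ⟨h1, h2⟩ <;>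
        simp [h1, h2, h0']
    have hconst : ∀ u v : V, φ u = φ v := by
      intro u v
      obtain ⟨w⟩ := hEe.preconnected u v
      exact walk_const φ hadj w
    have hy_zero : y = 0 := by
      funext e
      rw [hφ, hd φ e, hconst (h e) (t e)]
      simp
    funext e
    rw [← hyval e, hy_zero]
    rfl
  have hpd : (K.submatrix (Subtype.val : {e : E // e ∉ Ee} → E)
      (Subtype.val : {e : E // e ∉ Ee} → E)).PosDef := by
    refine Matrix.PosDef.of_dotProduct_mulVec_pos hsub.1 fun x hx => lt_of_le_of_ne (hsub.dotProduct_mulVec_nonneg x) fun heq => hx (key x ?_)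
    simpa using heq.symm
  exact ⟨hpd, hpd.isUnit⟩
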